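/- Let α, E, λ ∈ ℂ with λ ≠ 0, and define g(z) = (λ/z) · (1 + (α^2 z^4 - 2 E z^2)/λ^2)^(1/2), where w ↦ w^(1/2) denotes the principal complex power. Then there exists ε₀ > 0 such that for every ε with 0 < ε < ε₀, g is continuous on the circle |z| = ε, and the counterclockwise circle integral of g over |z| = ε equals 2πi λ. -/

import Mathlib

open Complex Metric

/-- Origin-circle contribution (small-circle monodromy of the regular singular point)
for the (variationally modified) 3D harmonic oscillator: for `λ ≠ 0`, the branch near
the origin `g(z) = (λ/z)(1 + (α² z⁴ - 2Ez²)/λ²)^{1/2}` of the leading WKB momentum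
`√(α² r² + λ²/r² - 2E)` is continuous on all sufficiently small circles `|z| = ε`,
and its counterclockwise circle integral equals `2πiλ`. -/
theorem oscillator_origin_circle (α E lam : ℂ) (hlam : lam ≠ 0) :
    ∃ ε₀ : ℝ, 0 < ε₀ ∧ ∀ ε : ℝ, 0 < ε → ε < ε₀ →
      ContinuousOn
        (fun z : ℂ => lam / z * (1 + (α ^ 2 * z ^ 4 - 2 * E * z ^ 2) / lam ^ 2) ^ (1 / 2 : ℂ))
        (Metric.sphere (0 : ℂ) ε) ∧
      circleIntegral
        (fun z : ℂ => lam / z * (1 + (α ^ 2 * z ^ 4 - 2 * E * z ^ 2) / lam ^ 2) ^ (1 / 2 : ℂ))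
        0 ε = 2 * Real.pi * Complex.I * lam := by
  set q : ℂ → ℂ := fun z => (α ^ 2 * z ^ 4 - 2 * E * z ^ 2) / lam ^ 2 with hqdef
  have hqc : Continuous q := by
    apply Continuous.div_const
    continuity
  have hq0 : q 0 = 0 := by simp [hqdef]
  obtain ⟨δ, hδ, hδ'⟩ := Metric.continuousAt_iff.mp hqc.continuousAt (1/2) (by norm_num)
  refine ⟨δ, hδ, fun ε hε hεδ => ?_⟩
  have hslit : ∀ z ∈ closedBall (0:ℂ) ε, 1 + q z ∈ Complex.slitPlane := by
    intro z hz
    have hz' : dist z 0 < δ := lt_of_le_of_lt (mem_closedBall.mp hz) hεδ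
    have h2 := hδ' hz'
    rw [hq0, dist_zero_right] at h2
    have h3 : |(q z).re| ≤ ‖q z‖ := Complex.abs_re_le_norm (q z)
    refine Or.inl ?_
    have : (1 + q z).re = 1 + (q z).re := by simp
    rw [this]
    have := abs_le.mp h3
    linarith
  have hF : DifferentiableOn ℂ (fun z => lam * (1 + q z) ^ (1 / 2 : ℂ))
      (closedBall (0:ℂ) ε) := by
    intro z hz
    apply DifferentiableAt.differentiableWithinAt
    have hq' : DifferentiableAt ℂ q z := by
      apply DifferentiableAt.div_const
      fun_prop
    exact (differentiableAt_const _).mul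
      (((differentiableAt_const _).add hq').cpow (differentiableAt_const _) (hslit z hz))
  have hd : DiffContOnCl ℂ (fun z => lam * (1 + q z) ^ (1 / 2 : ℂ)) (ball (0:ℂ) ε) := by
    apply DifferentiableOn.diffContOnCl
    rwa [closure_ball 0 hε.ne']
  have key := hd.circleIntegral_sub_inv_smul (mem_ball_self hε)
  have hfun : (fun z : ℂ => lam / z * (1 + (α ^ 2 * z ^ 4 - 2 * E * z ^ 2) / lam ^ 2)
      ^ (1 / 2 : ℂ)) = fun z : ℂ => (z - 0)⁻¹ • (lam * (1 + q z) ^ (1 / 2 : ℂ)) := by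
    funext z
    simp only [smul_eq_mul, hqdef, sub_zero]
    ring
  constructor
  · rw [hfun]
    intro z hz
    have hz0 : z ≠ 0 := by
      intro h
      rw [mem_sphere, h, dist_self] at hz
      exact hε.ne hz
    have hzc : z ∈ closedBall (0:ℂ) ε := sphere_subset_closedBall hz
    refine ContinuousWithinAt.smul (f := fun z : ℂ => (z - 0)⁻¹)
      (g := fun z => lam * (1 + q z) ^ (1 / 2 : ℂ)) ?_ ?_
    · exact ((continuousAt_id.sub continuousAt_const).inv₀
        (by simpa using hz0)).continuousWithinAt
    · exact (continuousAt_const.mul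
        (((continuousAt_const.add hqc.continuousAt).cpow continuousAt_const
          (hslit z hzc)))).continuousWithinAt
  · rw [hfun, key]
    simp only [hq0, add_zero, Complex.one_cpow, mul_one, smul_eq_mul]
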